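/- Let μ ∈ {0,1}. Then S_μ(Q_μ) = inf{ S_μ(φ) : φ ∈ H¹(ℝ²)∖{0}, I_μ(φ) = 0 }. -/

import Mathlib

open MeasureTheory Real Filter
open scoped Topology ENNReal

noncomputable section

abbrev E2 : Type := EuclideanSpace ℝ (Fin 2)

/-- Squared `L²` norm. -/
def l2Sq (u : E2 → ℂ) : ℝ := ∫ x : E2, ‖u x‖ ^ 2

/-- Squared `L²` norm of the gradient. -/
def gradSq (u : E2 → ℂ) : ℝ := ∫ x : E2, ‖fderiv ℝ u x‖ ^ 2

/-- Membership in `H¹(ℝ²)`. -/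
def MemH1 (u : E2 → ℂ) : Prop :=
  MemLp u 2 volume ∧ Differentiable ℝ u ∧ MemLp (fun x => fderiv ℝ u x) 2 volume

/-- Integrability of all exponentials `e^{a|u|²} - 1`. -/
def ExpIntegrable (u : E2 → ℂ) : Prop :=
  ∀ a : ℝ, 0 < a → Integrable (fun x : E2 => Real.exp (a * ‖u x‖ ^ 2) - 1)

/-- The nonlinearity `f_μ`. -/
def fmu (μ : ℝ) (z : ℂ) : ℂ :=
  ((Real.exp (4 * π * ‖z‖ ^ 2) - 1 - 4 * π * μ * ‖z‖ ^ 2 : ℝ) : ℂ) * z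

/-- The potential `F_μ`. -/
def Fmu (μ : ℝ) (z : ℂ) : ℝ :=
  (Real.exp (4 * π * ‖z‖ ^ 2) - 1 - 4 * π * ‖z‖ ^ 2 - 8 * π ^ 2 * μ * ‖z‖ ^ 4) / (8 * π)

/-- `Re (z̄ f_μ(z))`. -/
def nlDensity (μ : ℝ) (z : ℂ) : ℝ :=
  (Real.exp (4 * π * ‖z‖ ^ 2) - 1 - 4 * π * μ * ‖z‖ ^ 2) * ‖z‖ ^ 2

/-- Energy. -/
def Emu (μ : ℝ) (u : E2 → ℂ) : ℝ := gradSq u / 2 - ∫ x : E2, Fmu μ (u x)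

/-- Action. -/
def Smu (μ : ℝ) (u : E2 → ℂ) : ℝ := Emu μ u + l2Sq u / 2

/-- The functional `P_μ`. -/
def Pmu (μ : ℝ) (u : E2 → ℂ) : ℝ := l2Sq u / 2 - ∫ x : E2, Fmu μ (u x)

/-- The virial functional `I_μ`. -/
def Imu (μ : ℝ) (u : E2 → ℂ) : ℝ :=
  gradSq u - ∫ x : E2, (nlDensity μ (u x) - 2 * Fmu μ (u x))

/-- Laplacian on `ℝ²` (sum of second directional derivatives). -/
def lap (v : E2 → ℂ) (x : E2) : ℂ :=
  ∑ i : Fin 2, fderiv ℝ (fun y => fderiv ℝ v y (EuclideanSpace.single i 1)) x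
      (EuclideanSpace.single i 1)

/-- `φ` is a (pointwise) solution to the elliptic equation `-Δφ + φ = f_μ(φ)`. -/
def IsEllipticSolution (μ : ℝ) (φ : E2 → ℂ) : Prop :=
  ∀ x, -lap φ x + φ x = fmu μ (φ x)

/-- Ground state for `-ΔQ + Q = f_μ(Q)`. -/
structure IsGroundState (μ : ℝ) (Q : E2 → ℂ) : Prop where
  mem : MemH1 Q
  expint : ExpIntegrable Q
  nonzero : ¬ Q =ᵐ[volume] (0 : E2 → ℂ)
  radial : ∀ x y : E2, ‖x‖ = ‖y‖ → Q x = Q y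
  solves : IsEllipticSolution μ Q
  minimal : ∀ φ : E2 → ℂ, MemH1 φ → ExpIntegrable φ → ¬ φ =ᵐ[volume] (0 : E2 → ℂ) →
    IsEllipticSolution μ φ → Smu μ Q ≤ Smu μ φ
  grad_pos : 0 < gradSq Q
  grad_lt_one : gradSq Q < 1

section AuxCalc
open Real Set

/-- If `f 0 = 0` and `f` has nonnegative derivative on `[0,∞)`, then `f ≥ 0` there. -/
lemma nonneg_of_deriv {f f' : ℝ → ℝ} (hf : ∀ s, HasDerivAt f (f' s) s)
    (h0 : f 0 = 0) (h' : ∀ s, 0 ≤ s → 0 ≤ f' s) : ∀ s, 0 ≤ s → 0 ≤ f s := by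
  intro s hs
  have hmono : MonotoneOn f (Ici (0:ℝ)) := by
    apply monotoneOn_of_deriv_nonneg (convex_Ici 0)
      (fun t _ => (hf t).differentiableAt.continuousAt.continuousWithinAt)
      (fun t _ => (hf t).differentiableAt.differentiableWithinAt)
    intro t ht
    rw [interior_Ici] at ht
    rw [(hf t).deriv]
    exact h' t (le_of_lt ht)
  have := hmono (self_mem_Ici) hs hs
  rwa [h0] at this

lemma q_hasDeriv (s : ℝ) : HasDerivAt (fun s : ℝ => (s - 2) * exp s + s + 2)
    ((s - 1) * exp s + 1) s := by
  have h := ((((hasDerivAt_id s).sub_const 2).mul (Real.hasDerivAt_exp s)).add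
    (hasDerivAt_id s)).add_const 2
  exact h.congr_deriv (by simp; ring)

lemma q_nonneg : ∀ s, 0 ≤ s → 0 ≤ (s - 2) * exp s + s + 2 := by
  have hq' : ∀ s, 0 ≤ s → 0 ≤ (s - 1) * exp s + 1 := by
    apply nonneg_of_deriv (f' := fun s => s * exp s)
    · intro s
      have h := (((hasDerivAt_id s).sub_const 1).mul (Real.hasDerivAt_exp s)).add_const 1
      exact h.congr_deriv (by simp; ring)
    · simp
    · intro s hs; positivity
  exact nonneg_of_deriv q_hasDeriv (by norm_num) hq'

lemma p_nonneg : ∀ y, 0 ≤ y → 0 ≤ (y ^ 2 - 2 * y + 2) * exp y - 2 := by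
  apply nonneg_of_deriv (f' := fun y => y ^ 2 * exp y)
  · intro y
    have h := ((((hasDerivAt_pow 2 y).sub ((hasDerivAt_id y).const_mul 2)).add_const 2).mul
        (Real.hasDerivAt_exp y)).sub_const 2
    exact h.congr_deriv (by push_cast; simp; ring)
  · norm_num
  · intro y hy; positivity

lemma fm_hasDeriv (μ s : ℝ) : HasDerivAt (fun s : ℝ => exp s - 1 - s - μ * s ^ 2 / 2)
    (exp s - 1 - μ * s) s := by
  have h := (((Real.hasDerivAt_exp s).sub_const 1).sub (hasDerivAt_id s)).sub
      (((hasDerivAt_pow 2 s).const_mul μ).div_const 2)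
  exact h.congr_deriv (by push_cast; simp; ring)

/-- `fm μ s = e^s - 1 - s - μ s²/2` is nonnegative for `μ ≤ 1`, `s ≥ 0`. -/
lemma fm_nonneg {μ : ℝ} (hμ1 : μ ≤ 1) : ∀ s, 0 ≤ s → 0 ≤ exp s - 1 - s - μ * s ^ 2 / 2 := by
  apply nonneg_of_deriv (fm_hasDeriv μ) (by norm_num)
  intro s hs
  have h1 : μ * s ≤ s := by nlinarith
  nlinarith [Real.add_one_le_exp s]

/-- strict positivity of `fm` for `s > 0`. -/
lemma fm_pos {μ : ℝ} (hμ1 : μ ≤ 1) {s : ℝ} (hs : 0 < s) :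
    0 < exp s - 1 - s - μ * s ^ 2 / 2 := by
  have h2 : 0 ≤ exp (s/2) - 1 - (s/2) - 1 * (s/2) ^ 2 / 2 := fm_nonneg le_rfl (s/2) (by linarith)
  have h3 : exp s = exp (s/2) * exp (s/2) := by rw [← Real.exp_add]; ring_nf
  have h4 : (1 : ℝ) + s/2 < exp (s/2) := by
    have := Real.add_one_lt_exp (x := s/2) (by linarith)
    linarith
  nlinarith [exp_pos (s/2), sq_nonneg s, sq_nonneg (s/2)]

/-- monotonicity of `fm μ` on `[0, ∞)` (for `μ ≤ 1`). -/
lemma fm_mono {μ : ℝ} (hμ1 : μ ≤ 1) {s x : ℝ} (hs : 0 ≤ s) (hsx : s ≤ x) :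
    exp s - 1 - s - μ * s ^ 2 / 2 ≤ exp x - 1 - x - μ * x ^ 2 / 2 := by
  have := nonneg_of_deriv (f := fun y => (exp (s + y) - 1 - (s + y) - μ * (s + y) ^ 2 / 2)
      - (exp s - 1 - s - μ * s ^ 2 / 2)) (f' := fun y => exp (s + y) - 1 - μ * (s + y))
    (fun y => (((fm_hasDeriv μ (s + y)).comp y ((hasDerivAt_id y).const_add s)).sub_const
      (exp s - 1 - s - μ * s ^ 2 / 2)).congr_deriv (by simp)) (by simp) ?_ (x - s) (by linarith)
  · simpa using this
  · intro y hy
    show (0:ℝ) ≤ exp (s + y) - 1 - μ * (s + y)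
    have h1 : μ * (s + y) ≤ s + y := by nlinarith
    nlinarith [Real.add_one_le_exp (s + y)]


lemma monoOn_of_hasDeriv {f f' : ℝ → ℝ} {D : Set ℝ} (hD : Convex ℝ D)
    (hc : ContinuousOn f D) (hd : ∀ t ∈ interior D, HasDerivAt f (f' t) t)
    (h' : ∀ t ∈ interior D, 0 ≤ f' t) : MonotoneOn f D := by
  apply monotoneOn_of_deriv_nonneg hD hc
    (fun t ht => (hd t ht).differentiableAt.differentiableWithinAt)
  intro t ht; rw [(hd t ht).deriv]; exact h' t ht

lemma antiOn_of_hasDeriv {f f' : ℝ → ℝ} {D : Set ℝ} (hD : Convex ℝ D)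
    (hc : ContinuousOn f D) (hd : ∀ t ∈ interior D, HasDerivAt f (f' t) t)
    (h' : ∀ t ∈ interior D, f' t ≤ 0) : AntitoneOn f D := by
  apply antitoneOn_of_deriv_nonpos hD hc
    (fun t ht => (hd t ht).differentiableAt.differentiableWithinAt)
  intro t ht; rw [(hd t ht).deriv]; exact h' t ht


/-- `fm μ s / s²` is monotone: for `0 ≤ s ≤ x`, `fm μ s * x² ≤ fm μ x * s²`. -/
lemma fm_sq_scale {μ : ℝ} (hμ1 : μ ≤ 1) {s x : ℝ} (hs : 0 ≤ s) (hsx : s ≤ x) :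
    (exp s - 1 - s - μ * s ^ 2 / 2) * x ^ 2 ≤ (exp x - 1 - x - μ * x ^ 2 / 2) * s ^ 2 := by
  rcases eq_or_lt_of_le hs with rfl | hs0
  · simp only [Real.exp_zero]
    norm_num
  · set w : ℝ → ℝ := fun t => (exp t - 1 - t - μ * t ^ 2 / 2) / t ^ 2 with hw
    have hder : ∀ t ∈ Ioi (0:ℝ), HasDerivAt w (((t - 2) * exp t + t + 2) / t ^ 3) t := by
      intro t ht
      rw [mem_Ioi] at ht
      have ht0 : (t : ℝ) ≠ 0 := ne_of_gt ht
      have h := (fm_hasDeriv μ t).div (hasDerivAt_pow 2 t) (pow_ne_zero 2 ht0)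
      apply h.congr_deriv
      field_simp
      ring
    have hmono : MonotoneOn w (Ioi 0) := by
      apply monoOn_of_hasDeriv (convex_Ioi 0)
        (fun t ht => (hder t ht).differentiableAt.continuousAt.continuousWithinAt)
        (fun t ht => hder t (by rwa [interior_Ioi] at ht))
      intro t ht
      rw [interior_Ioi, mem_Ioi] at ht
      exact div_nonneg (q_nonneg t ht.le) (by positivity)
    have hx0 : 0 < x := lt_of_lt_of_le hs0 hsx
    have := hmono (mem_Ioi.2 hs0) (mem_Ioi.2 hx0) hsx
    rw [hw] at this
    simp only [div_le_div_iff₀ (by positivity : (0:ℝ) < s ^ 2) (by positivity : (0:ℝ) < x ^ 2)] at this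
    linarith

/-- The key pointwise inequality `K(t) ≥ 0`. -/
lemma K_nonneg (μ : ℝ) {x t : ℝ} (hx : 0 ≤ x) (ht : 0 < t) :
    (t - 1) * ((x - 1) * exp x + 1 - μ * x ^ 2 / 2) + (exp x - 1 - x - μ * x ^ 2 / 2)
      ≤ (exp (t * x) - 1 - t * x - μ * (t * x) ^ 2 / 2) / t := by
  set G1 : ℝ := (x - 1) * exp x + 1 - μ * x ^ 2 / 2 with hG1
  set M : ℝ → ℝ := fun t => ((t * x - 1) * exp (t * x) + 1 - μ * (t * x) ^ 2 / 2) / t ^ 2 with hM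
  set K : ℝ → ℝ := fun t =>
    (exp (t * x) - 1 - t * x - μ * (t * x) ^ 2 / 2) / t - (t - 1) * G1
      - (exp x - 1 - x - μ * x ^ 2 / 2) with hK
  -- derivative of M
  have hMder : ∀ t : ℝ, 0 < t →
      HasDerivAt M ((((t * x) ^ 2 - 2 * (t * x) + 2) * exp (t * x) - 2) / t ^ 3) t := by
    intro t ht0
    have htx : HasDerivAt (fun t : ℝ => t * x) x t := hasDerivAt_mul_const x
    have hexp : HasDerivAt (fun t : ℝ => exp (t * x)) (exp (t * x) * x) t := by
      have h := (Real.hasDerivAt_exp (t * x)).comp t htx; exact h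
    have hG := (((htx.sub_const 1).mul hexp).add_const 1).sub
        ((((hasDerivAt_pow 2 (t * x)).comp t htx).const_mul μ).div_const 2)
    have h := hG.div (hasDerivAt_pow 2 t) (pow_ne_zero 2 (ne_of_gt ht0))
    apply h.congr_deriv
    have ht0' : (t : ℝ) ≠ 0 := ne_of_gt ht0
    simp only [Pi.add_apply, Pi.sub_apply, Pi.mul_apply, Function.comp_apply, id_eq]
    field_simp
    ring
  have hMmono : MonotoneOn M (Ioi 0) := by
    apply monoOn_of_hasDeriv (convex_Ioi 0)
    · intro t ht
      exact (hMder t ht).differentiableAt.continuousAt.continuousWithinAt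
    · intro t ht; rw [interior_Ioi] at ht; exact hMder t ht
    · intro t ht
      rw [interior_Ioi, mem_Ioi] at ht
      have := p_nonneg (t * x) (mul_nonneg ht.le hx)
      exact div_nonneg this (by positivity)
  -- derivative of K
  have hKder : ∀ t : ℝ, 0 < t → HasDerivAt K (M t - G1) t := by
    intro t ht0
    have htx : HasDerivAt (fun t : ℝ => t * x) x t := hasDerivAt_mul_const x
    have hexp : HasDerivAt (fun t : ℝ => exp (t * x)) (exp (t * x) * x) t := by
      have h := (Real.hasDerivAt_exp (t * x)).comp t htx; exact h
    have hN := ((hexp.sub_const 1).sub htx).sub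
        ((((hasDerivAt_pow 2 (t * x)).comp t htx).const_mul μ).div_const 2)
    have h := ((hN.div (hasDerivAt_id t) (ne_of_gt ht0)).sub
      (((hasDerivAt_id t).sub_const 1).mul_const G1)).sub_const (exp x - 1 - x - μ * x ^ 2 / 2)
    apply h.congr_deriv
    have ht0' : (t : ℝ) ≠ 0 := ne_of_gt ht0
    rw [hM, hG1]
    simp only [Pi.add_apply, Pi.sub_apply, Pi.mul_apply, Function.comp_apply, id_eq]
    field_simp
    ring
  have hK1 : K 1 = 0 := by rw [hK]; simp
  have hM1 : M 1 = G1 := by rw [hM, hG1]; norm_num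
  -- conclude K t ≥ 0
  have hKt : 0 ≤ K t := by
    rcases le_or_gt 1 t with h1t | ht1
    · have hmono : MonotoneOn K (Ici 1) := by
        apply monoOn_of_hasDeriv (convex_Ici 1)
        · intro s hs
          exact (hKder s (lt_of_lt_of_le one_pos hs)).differentiableAt.continuousAt.continuousWithinAt
        · intro s hs; rw [interior_Ici] at hs; exact hKder s (lt_trans one_pos hs)
        · intro s hs
          rw [interior_Ici] at hs
          have := hMmono (mem_Ioi.2 one_pos) (mem_Ioi.2 (lt_trans one_pos hs)) (le_of_lt hs)
          rw [hM1] at this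
          linarith
      have := hmono (self_mem_Ici) h1t h1t
      rwa [hK1] at this
    · have hanti : AntitoneOn K (Ioc 0 1) := by
        apply antiOn_of_hasDeriv (convex_Ioc 0 1)
        · intro s hs
          exact (hKder s hs.1).differentiableAt.continuousAt.continuousWithinAt
        · intro s hs
          rw [interior_Ioc] at hs; exact hKder s hs.1
        · intro s hs
          rw [interior_Ioc] at hs
          have := hMmono (mem_Ioi.2 hs.1) (mem_Ioi.2 one_pos) (le_of_lt hs.2)
          rw [hM1] at this
          linarith
      have := hanti (mem_Ioc.2 ⟨ht, le_of_lt ht1⟩) (mem_Ioc.2 ⟨one_pos, le_rfl⟩) (le_of_lt ht1)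
      rwa [hK1] at this
  rw [hK] at hKt
  simp only at hKt
  linarith

end AuxCalc
section AuxMeasure
open Real Set

variable {μ : ℝ}

lemma norm_smul_sq (c : ℝ) (z : ℂ) : ‖c • z‖ ^ 2 = c ^ 2 * ‖z‖ ^ 2 := by
  rw [norm_smul, Real.norm_eq_abs, mul_pow, sq_abs]

lemma Fmu_eq (z : ℂ) : Fmu μ z =
    (exp (4 * π * ‖z‖ ^ 2) - 1 - 4 * π * ‖z‖ ^ 2 - μ * (4 * π * ‖z‖ ^ 2) ^ 2 / 2) / (8 * π) := by
  unfold Fmu; congr 1; ring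

lemma Fmu_nonneg (hμ1 : μ ≤ 1) (z : ℂ) : 0 ≤ Fmu μ z := by
  rw [Fmu_eq]
  exact div_nonneg (fm_nonneg hμ1 _ (by positivity)) (by positivity)

lemma Fmu_le (hμ0 : 0 ≤ μ) (z : ℂ) : Fmu μ z ≤ (exp (4 * π * ‖z‖ ^ 2) - 1) / (8 * π) := by
  rw [Fmu_eq, div_le_div_iff_of_pos_right (by positivity)]
  nlinarith [sq_nonneg ‖z‖, pi_pos, sq_nonneg (4 * π * ‖z‖ ^ 2),
    mul_nonneg hμ0 (sq_nonneg (4 * π * ‖z‖ ^ 2))]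

lemma Fmu_pos (hμ1 : μ ≤ 1) {z : ℂ} (hz : z ≠ 0) : 0 < Fmu μ z := by
  rw [Fmu_eq]
  have hz' : 0 < ‖z‖ := norm_pos_iff.2 hz
  exact div_pos (fm_pos hμ1 (by positivity)) (by positivity)

lemma nl_nonneg (hμ1 : μ ≤ 1) (z : ℂ) : 0 ≤ nlDensity μ z := by
  unfold nlDensity
  apply mul_nonneg _ (sq_nonneg _)
  nlinarith [Real.add_one_le_exp (4 * π * ‖z‖ ^ 2), pi_pos, sq_nonneg ‖z‖,
    mul_nonneg (sub_nonneg.2 hμ1) (by positivity : (0:ℝ) ≤ 4 * π * ‖z‖ ^ 2)]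

lemma nl_le (hμ0 : 0 ≤ μ) (z : ℂ) :
    nlDensity μ z ≤ (exp (8 * π * ‖z‖ ^ 2) - 1) / (4 * π) := by
  unfold nlDensity
  rw [le_div_iff₀ (by positivity : (0:ℝ) < 4 * π)]
  have hE : exp (8 * π * ‖z‖ ^ 2) = exp (4 * π * ‖z‖ ^ 2) * exp (4 * π * ‖z‖ ^ 2) := by
    rw [← Real.exp_add]; congr 1; ring
  rw [hE]
  have hs0 : (0:ℝ) ≤ 4 * π * ‖z‖ ^ 2 := by positivity
  have h1 : 4 * π * ‖z‖ ^ 2 ≤ exp (4 * π * ‖z‖ ^ 2) - 1 := by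
    nlinarith [Real.add_one_le_exp (4 * π * ‖z‖ ^ 2)]
  have h2 : (exp (4 * π * ‖z‖ ^ 2) - 1) * (4 * π * ‖z‖ ^ 2)
      ≤ (exp (4 * π * ‖z‖ ^ 2) - 1) * (exp (4 * π * ‖z‖ ^ 2) - 1) :=
    mul_le_mul_of_nonneg_left h1 (by linarith)
  have h3 : (0:ℝ) ≤ μ * (4 * π * ‖z‖ ^ 2) * (4 * π * ‖z‖ ^ 2) := by positivity
  have hE1 : (1:ℝ) ≤ exp (4 * π * ‖z‖ ^ 2) := Real.one_le_exp hs0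
  nlinarith [h2, h3, hE1]

lemma cont_Fmu : Continuous (Fmu μ) := by unfold Fmu; fun_prop
lemma cont_nl : Continuous (nlDensity μ) := by unfold nlDensity; fun_prop

lemma integrable_Fmu (hμ0 : 0 ≤ μ) (hμ1 : μ ≤ 1) {ψ : E2 → ℂ} (hc : Continuous ψ)
    (he : ExpIntegrable ψ) : Integrable (fun x => Fmu μ (ψ x)) := by
  have hb := (he (4 * π) (by positivity)).div_const (8 * π)
  apply hb.mono ((cont_Fmu.comp hc).aestronglyMeasurable)
  filter_upwards with x
  have h1 : (0:ℝ) ≤ (exp (4 * π * ‖ψ x‖ ^ 2) - 1) / (8 * π) := by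
    have := Real.one_le_exp (by positivity : (0:ℝ) ≤ 4 * π * ‖ψ x‖ ^ 2)
    exact div_nonneg (by linarith) (by positivity)
  show ‖Fmu μ (ψ x)‖ ≤ _
  rw [Real.norm_eq_abs, Real.norm_eq_abs, abs_of_nonneg (Fmu_nonneg hμ1 _), abs_of_nonneg h1]
  exact Fmu_le hμ0 _

lemma integrable_nl (hμ0 : 0 ≤ μ) (hμ1 : μ ≤ 1) {ψ : E2 → ℂ} (hc : Continuous ψ)
    (he : ExpIntegrable ψ) : Integrable (fun x => nlDensity μ (ψ x)) := by
  have hb := (he (8 * π) (by positivity)).div_const (4 * π)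
  apply hb.mono ((cont_nl.comp hc).aestronglyMeasurable)
  filter_upwards with x
  have h1 : (0:ℝ) ≤ (exp (8 * π * ‖ψ x‖ ^ 2) - 1) / (4 * π) := by
    have := Real.one_le_exp (by positivity : (0:ℝ) ≤ 8 * π * ‖ψ x‖ ^ 2)
    exact div_nonneg (by linarith) (by positivity)
  show ‖nlDensity μ (ψ x)‖ ≤ _
  rw [Real.norm_eq_abs, Real.norm_eq_abs, abs_of_nonneg (nl_nonneg hμ1 _), abs_of_nonneg h1]
  exact nl_le hμ0 _

lemma expIntegrable_smul {φ : E2 → ℂ} (he : ExpIntegrable φ) {c : ℝ} (hc : c ≠ 0) :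
    ExpIntegrable (fun x => c • φ x) := by
  intro a ha
  have h := he (a * c ^ 2) (by positivity)
  have heq : (fun x : E2 => exp (a * ‖c • φ x‖ ^ 2) - 1)
      = fun x => exp (a * c ^ 2 * ‖φ x‖ ^ 2) - 1 := by
    funext x; rw [norm_smul_sq]; ring_nf
  rw [heq]; exact h

lemma integrable_sq {φ : E2 → ℂ} (h2 : MemLp φ 2 volume) :
    Integrable (fun x => ‖φ x‖ ^ 2) :=
  (memLp_two_iff_integrable_sq_norm h2.aestronglyMeasurable).1 h2

lemma l2_pos {φ : E2 → ℂ} (h2 : MemLp φ 2 volume) (hnz : ¬ φ =ᵐ[volume] (0 : E2 → ℂ)) :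
    0 < l2Sq φ := by
  unfold l2Sq
  have hi := integrable_sq h2
  have h0 : 0 ≤ ∫ x : E2, ‖φ x‖ ^ 2 := integral_nonneg (fun x => sq_nonneg _)
  rcases h0.lt_or_eq with h | h
  · exact h
  exfalso; apply hnz
  have hz := (integral_eq_zero_iff_of_nonneg (fun x => sq_nonneg _) hi).1 h.symm
  filter_upwards [hz] with x hx
  have : ‖φ x‖ ^ 2 = 0 := hx
  simpa using this

lemma intF_pos (hμ0 : 0 ≤ μ) (hμ1 : μ ≤ 1) {φ : E2 → ℂ} (hc : Continuous φ)
    (he : ExpIntegrable φ) (hnz : ¬ φ =ᵐ[volume] (0 : E2 → ℂ)) :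
    0 < ∫ x : E2, Fmu μ (φ x) := by
  have hi := integrable_Fmu hμ0 hμ1 hc he
  have h0 : 0 ≤ ∫ x : E2, Fmu μ (φ x) := integral_nonneg (fun x => Fmu_nonneg hμ1 _)
  rcases h0.lt_or_eq with h | h
  · exact h
  exfalso; apply hnz
  have hz := (integral_eq_zero_iff_of_nonneg (fun x => Fmu_nonneg hμ1 _) hi).1 h.symm
  filter_upwards [hz] with x hx
  by_contra hne
  exact absurd hx (ne_of_gt (Fmu_pos hμ1 hne))

end AuxMeasure
section AuxScale
open Real Set

variable {μ : ℝ} {φ : E2 → ℂ}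

lemma finrank_E2 : Module.finrank ℝ E2 = 2 := finrank_euclideanSpace_fin

lemma integral_scale (f : E2 → ℝ) {lam : ℝ} (hlam : 0 < lam) :
    ∫ x : E2, f (lam • x) = (lam ^ 2)⁻¹ * ∫ x, f x := by
  have h := MeasureTheory.Measure.integral_comp_smul_of_nonneg (μ := volume) f lam (hR := hlam.le)
  rw [finrank_E2] at h
  simpa [smul_eq_mul] using h

lemma hasFDerivAt_scale (hd : Differentiable ℝ φ) (lam : ℝ) (x : E2) :
    HasFDerivAt (fun y : E2 => lam • φ (lam • y)) ((lam * lam) • fderiv ℝ φ (lam • x)) x := by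
  have hlin : HasFDerivAt (fun y : E2 => lam • y) (lam • ContinuousLinearMap.id ℝ E2) x :=
    (lam • ContinuousLinearMap.id ℝ E2).hasFDerivAt
  have hφ : HasFDerivAt φ (fderiv ℝ φ (lam • x)) (lam • x) := (hd (lam • x)).hasFDerivAt
  have hcomp := hφ.comp x hlin
  have hsmul := hcomp.const_smul lam
  refine HasFDerivAt.congr_fderiv hsmul ?_
  ext v
  simp [ContinuousLinearMap.smul_apply, ContinuousLinearMap.comp_apply, _root_.map_smul, smul_smul]

lemma fderiv_scale (hd : Differentiable ℝ φ) (lam : ℝ) (x : E2) :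
    fderiv ℝ (fun y : E2 => lam • φ (lam • y)) x = (lam * lam) • fderiv ℝ φ (lam • x) :=
  (hasFDerivAt_scale hd lam x).fderiv

lemma norm_fderiv_scale (hd : Differentiable ℝ φ) {lam : ℝ} (hlam : 0 < lam) (x : E2) :
    ‖fderiv ℝ (fun y : E2 => lam • φ (lam • y)) x‖ ^ 2
      = lam ^ 4 * ‖fderiv ℝ φ (lam • x)‖ ^ 2 := by
  rw [fderiv_scale hd lam x]
  have h := norm_smul (lam * lam) (fderiv ℝ φ (lam • x))
  rw [h, Real.norm_eq_abs, abs_of_pos (by positivity), mul_pow]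
  ring

lemma gradSq_scale (hd : Differentiable ℝ φ) {lam : ℝ} (hlam : 0 < lam) :
    gradSq (fun y : E2 => lam • φ (lam • y)) = lam ^ 2 * gradSq φ := by
  unfold gradSq
  have h1 : (fun x : E2 => ‖fderiv ℝ (fun y : E2 => lam • φ (lam • y)) x‖ ^ 2)
      = fun x : E2 => (fun y : E2 => lam ^ 4 * ‖fderiv ℝ φ y‖ ^ 2) (lam • x) :=
    funext fun x => norm_fderiv_scale hd hlam x
  rw [h1, integral_scale (fun y : E2 => lam ^ 4 * ‖fderiv ℝ φ y‖ ^ 2) hlam, integral_const_mul _ _]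
  have : lam ≠ 0 := hlam.ne'
  field_simp

lemma l2Sq_scale {lam : ℝ} (hlam : 0 < lam) :
    l2Sq (fun y : E2 => lam • φ (lam • y)) = l2Sq φ := by
  unfold l2Sq
  have h1 : (fun x : E2 => ‖lam • φ (lam • x)‖ ^ 2)
      = fun x : E2 => (fun y : E2 => lam ^ 2 * ‖φ y‖ ^ 2) (lam • x) :=
    funext fun x => norm_smul_sq lam (φ (lam • x))
  rw [h1, integral_scale (fun y : E2 => lam ^ 2 * ‖φ y‖ ^ 2) hlam, integral_const_mul _ _]
  have : lam ≠ 0 := hlam.ne'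
  field_simp

lemma intF_scale {lam : ℝ} (hlam : 0 < lam) :
    ∫ x : E2, Fmu μ (lam • φ (lam • x)) = (lam ^ 2)⁻¹ * ∫ x : E2, Fmu μ (lam • φ x) :=
  integral_scale (fun y => Fmu μ (lam • φ y)) hlam

lemma qmp_smul {lam : ℝ} (hlam : lam ≠ 0) :
    MeasureTheory.Measure.QuasiMeasurePreserving (fun x : E2 => lam • x) volume volume := by
  refine ⟨(continuous_const_smul lam).measurable, ?_⟩
  rw [MeasureTheory.Measure.map_addHaar_smul volume hlam]
  exact Measure.smul_absolutelyContinuous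

lemma memH1_scale (hmem : MemH1 φ) {lam : ℝ} (hlam : 0 < lam) :
    MemH1 (fun y : E2 => lam • φ (lam • y)) := by
  have hd := hmem.2.1
  have hcont : Continuous fun y : E2 => lam • φ (lam • y) :=
    (hd.continuous.comp (continuous_const_smul lam)).const_smul lam
  refine ⟨?_, fun y => (hasFDerivAt_scale hd lam y).differentiableAt, ?_⟩
  · rw [memLp_two_iff_integrable_sq_norm hcont.aestronglyMeasurable]
    have h1 : (fun x : E2 => ‖lam • φ (lam • x)‖ ^ 2)
        = fun x : E2 => (fun y : E2 => lam ^ 2 * ‖φ y‖ ^ 2) (lam • x) :=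
      funext fun x => norm_smul_sq lam (φ (lam • x))
    rw [h1]
    exact ((integrable_sq hmem.1).const_mul (lam ^ 2)).comp_smul hlam.ne'
  · have haesm : AEStronglyMeasurable (fun x : E2 => fderiv ℝ φ x) volume :=
      hmem.2.2.aestronglyMeasurable
    have haesm2 : AEStronglyMeasurable
        (fun x : E2 => fderiv ℝ (fun y : E2 => lam • φ (lam • y)) x) volume := by
      have := (haesm.comp_quasiMeasurePreserving (qmp_smul hlam.ne')).const_smul (lam * lam)
      apply this.congr
      filter_upwards with x
      exact (fderiv_scale hd lam x).symm
    rw [memLp_two_iff_integrable_sq_norm haesm2]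
    have h1 : (fun x : E2 => ‖fderiv ℝ (fun y : E2 => lam • φ (lam • y)) x‖ ^ 2)
        = fun x : E2 => (fun y : E2 => lam ^ 4 * ‖fderiv ℝ φ y‖ ^ 2) (lam • x) :=
      funext fun x => norm_fderiv_scale hd hlam x
    rw [h1]
    have hsq : Integrable (fun x : E2 => ‖fderiv ℝ φ x‖ ^ 2) :=
      (memLp_two_iff_integrable_sq_norm haesm).1 hmem.2.2
    exact (hsq.const_mul (lam ^ 4)).comp_smul hlam.ne'

lemma expIntegrable_scale (he : ExpIntegrable φ) {lam : ℝ} (hlam : 0 < lam) :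
    ExpIntegrable (fun y : E2 => lam • φ (lam • y)) := by
  intro a ha
  have h := (expIntegrable_smul he hlam.ne' a ha).comp_smul hlam.ne'
  exact h

lemma nonzero_scale (h2 : MemLp φ 2 volume) (hnz : ¬ φ =ᵐ[volume] (0 : E2 → ℂ))
    {lam : ℝ} (hlam : 0 < lam) :
    ¬ (fun y : E2 => lam • φ (lam • y)) =ᵐ[volume] (0 : E2 → ℂ) := by
  intro h
  have hzero : l2Sq (fun y : E2 => lam • φ (lam • y)) = 0 := by
    unfold l2Sq
    rw [integral_congr_ae (g := fun _ => (0:ℝ)) ?_, integral_zero]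
    filter_upwards [h] with x hx
    rw [show lam • φ (lam • x) = (0 : ℂ) from hx]
    simp
  rw [l2Sq_scale hlam] at hzero
  exact absurd hzero (ne_of_gt (l2_pos h2 hnz))

end AuxScale
section AuxIVT
open Real Set

variable {μ : ℝ} {φ : E2 → ℂ}

lemma Fmu_smul_eq (c : ℝ) (z : ℂ) : Fmu μ (c • z) =
    (exp (c ^ 2 * (4 * π * ‖z‖ ^ 2)) - 1 - c ^ 2 * (4 * π * ‖z‖ ^ 2)
      - μ * (c ^ 2 * (4 * π * ‖z‖ ^ 2)) ^ 2 / 2) / (8 * π) := by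
  have h : 4 * π * ‖c • z‖ ^ 2 = c ^ 2 * (4 * π * ‖z‖ ^ 2) := by rw [norm_smul_sq]; ring
  rw [Fmu_eq, h]

lemma Fmu_smul_le_small (hμ0 : 0 ≤ μ) (hμ1 : μ ≤ 1) {c : ℝ} (hc0 : 0 ≤ c) (hc1 : c ≤ 1)
    (z : ℂ) : Fmu μ (c • z) ≤ c ^ 4 * ((exp (4 * π * ‖z‖ ^ 2) - 1) / (8 * π)) := by
  rw [Fmu_smul_eq, mul_div_assoc']
  rw [div_le_div_iff_of_pos_right (by positivity : (0:ℝ) < 8 * π)]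
  have hs0 : (0:ℝ) ≤ 4 * π * ‖z‖ ^ 2 := by positivity
  rcases eq_or_lt_of_le hs0 with h | h
  · rw [← h]
    norm_num
  · have harg : c ^ 2 * (4 * π * ‖z‖ ^ 2) ≤ 4 * π * ‖z‖ ^ 2 := by
      nlinarith [mul_nonneg (by nlinarith : (0:ℝ) ≤ 1 - c ^ 2) hs0]
    have key := fm_sq_scale hμ1 (s := c ^ 2 * (4 * π * ‖z‖ ^ 2)) (x := 4 * π * ‖z‖ ^ 2)
      (by positivity) harg
    have h5 : exp (4 * π * ‖z‖ ^ 2) - 1 - (4 * π * ‖z‖ ^ 2) - μ * (4 * π * ‖z‖ ^ 2) ^ 2 / 2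
        ≤ exp (4 * π * ‖z‖ ^ 2) - 1 := by
      nlinarith [mul_nonneg hμ0 (sq_nonneg (4 * π * ‖z‖ ^ 2))]
    have h6 : (exp (c ^ 2 * (4 * π * ‖z‖ ^ 2)) - 1 - c ^ 2 * (4 * π * ‖z‖ ^ 2)
        - μ * (c ^ 2 * (4 * π * ‖z‖ ^ 2)) ^ 2 / 2) * (4 * π * ‖z‖ ^ 2) ^ 2
        ≤ (c ^ 4 * (exp (4 * π * ‖z‖ ^ 2) - 1)) * (4 * π * ‖z‖ ^ 2) ^ 2 := by
      nlinarith [key, mul_le_mul_of_nonneg_right h5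
        (by positivity : (0:ℝ) ≤ c ^ 4 * (4 * π * ‖z‖ ^ 2) ^ 2)]
    exact le_of_mul_le_mul_right h6 (by positivity)

lemma Fmu_smul_ge_big (hμ1 : μ ≤ 1) {c : ℝ} (hc : 1 ≤ c) (z : ℂ) :
    c ^ 4 * Fmu μ z ≤ Fmu μ (c • z) := by
  rw [Fmu_smul_eq, Fmu_eq, mul_div_assoc']
  rw [div_le_div_iff_of_pos_right (by positivity : (0:ℝ) < 8 * π)]
  have hs0 : (0:ℝ) ≤ 4 * π * ‖z‖ ^ 2 := by positivity
  rcases eq_or_lt_of_le hs0 with h | h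
  · rw [← h]
    norm_num
  · have harg : 4 * π * ‖z‖ ^ 2 ≤ c ^ 2 * (4 * π * ‖z‖ ^ 2) := by
      nlinarith [mul_nonneg (by nlinarith : (0:ℝ) ≤ c ^ 2 - 1) hs0]
    have key := fm_sq_scale hμ1 (s := 4 * π * ‖z‖ ^ 2) (x := c ^ 2 * (4 * π * ‖z‖ ^ 2))
      hs0 harg
    have h6 : (c ^ 4 * (exp (4 * π * ‖z‖ ^ 2) - 1 - (4 * π * ‖z‖ ^ 2)
          - μ * (4 * π * ‖z‖ ^ 2) ^ 2 / 2)) * (4 * π * ‖z‖ ^ 2) ^ 2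
        ≤ (exp (c ^ 2 * (4 * π * ‖z‖ ^ 2)) - 1 - c ^ 2 * (4 * π * ‖z‖ ^ 2)
          - μ * (c ^ 2 * (4 * π * ‖z‖ ^ 2)) ^ 2 / 2) * (4 * π * ‖z‖ ^ 2) ^ 2 := by
      nlinarith [key]
    exact le_of_mul_le_mul_right h6 (by positivity)

lemma contH (hμ0 : 0 ≤ μ) (hμ1 : μ ≤ 1) (hc : Continuous φ) (he : ExpIntegrable φ)
    {M : ℝ} (hM : 0 < M) :
    ContinuousOn (fun c : ℝ => ∫ x : E2, Fmu μ (c • φ x)) (Icc 0 M) := by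
  apply continuousOn_of_dominated
    (bound := fun x : E2 => (exp (4 * π * M ^ 2 * ‖φ x‖ ^ 2) - 1) / (8 * π))
  · intro c _
    exact (cont_Fmu.comp (hc.const_smul c)).aestronglyMeasurable
  · intro c hcm
    filter_upwards with x
    have h0 : (0:ℝ) ≤ Fmu μ (c • φ x) := Fmu_nonneg hμ1 _
    rw [Real.norm_eq_abs, abs_of_nonneg h0]
    have h1 : Fmu μ (c • φ x) ≤ (exp (4 * π * ‖c • φ x‖ ^ 2) - 1) / (8 * π) := Fmu_le hμ0 _
    have h2 : 4 * π * ‖c • φ x‖ ^ 2 ≤ 4 * π * M ^ 2 * ‖φ x‖ ^ 2 := by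
      rw [norm_smul_sq]
      have hcM : c ^ 2 ≤ M ^ 2 := by nlinarith [hcm.1, hcm.2]
      nlinarith [mul_nonneg (sub_nonneg.2 hcM) (by positivity : (0:ℝ) ≤ 4 * π * ‖φ x‖ ^ 2),
        sq_nonneg ‖φ x‖, pi_pos]
    have h3 : exp (4 * π * ‖c • φ x‖ ^ 2) ≤ exp (4 * π * M ^ 2 * ‖φ x‖ ^ 2) :=
      Real.exp_le_exp.2 h2
    calc Fmu μ (c • φ x) ≤ (exp (4 * π * ‖c • φ x‖ ^ 2) - 1) / (8 * π) := h1
      _ ≤ (exp (4 * π * M ^ 2 * ‖φ x‖ ^ 2) - 1) / (8 * π) := by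
          rw [div_le_div_iff_of_pos_right (by positivity : (0:ℝ) < 8 * π)]
          linarith
  · exact (he (4 * π * M ^ 2) (by positivity)).div_const (8 * π)
  · filter_upwards with x
    exact (cont_Fmu.comp (continuous_id.smul continuous_const)).continuousOn

/-- Existence of a dilation parameter at which `P` vanishes. -/
lemma exists_lam (hμ0 : 0 ≤ μ) (hμ1 : μ ≤ 1) (hmem : MemH1 φ) (he : ExpIntegrable φ)
    (hnz : ¬ φ =ᵐ[volume] (0 : E2 → ℂ)) :
    ∃ lam : ℝ, 0 < lam ∧ l2Sq φ / 2 = (lam ^ 2)⁻¹ * ∫ x : E2, Fmu μ (lam • φ x) := by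
  have hcont : Continuous φ := hmem.2.1.continuous
  obtain ⟨H, hH⟩ : ∃ H : ℝ → ℝ, H = fun c => ∫ x : E2, Fmu μ (c • φ x) := ⟨_, rfl⟩
  obtain ⟨L, hLdef⟩ : ∃ L : ℝ, L = l2Sq φ := ⟨_, rfl⟩
  have hL : 0 < L := hLdef ▸ l2_pos hmem.1 hnz
  obtain ⟨C, hCdef⟩ : ∃ C : ℝ, C = ∫ x : E2, (exp (4 * π * ‖φ x‖ ^ 2) - 1) / (8 * π) :=
    ⟨_, rfl⟩
  have hC0 : 0 ≤ C := by
    rw [hCdef]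
    apply integral_nonneg
    intro x
    have h1 := Real.one_le_exp (by positivity : (0:ℝ) ≤ 4 * π * ‖φ x‖ ^ 2)
    exact div_nonneg (by linarith) (by positivity)
  obtain ⟨D, hDdef⟩ : ∃ D : ℝ, D = ∫ x : E2, Fmu μ (φ x) := ⟨_, rfl⟩
  have hD : 0 < D := hDdef ▸ intF_pos hμ0 hμ1 hcont he hnz
  have hH1 : H 1 = D := by rw [hH, hDdef]; simp
  -- small parameter
  obtain ⟨ε, hε0, hε1, hε2⟩ : ∃ ε : ℝ, 0 < ε ∧ ε ≤ 1 ∧ ε ^ 2 * (C + 1) ≤ L / 2 := by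
    refine ⟨min 1 (Real.sqrt (L / (2 * (C + 1)))),
      lt_min one_pos (Real.sqrt_pos.2 (by positivity)), min_le_left _ _, ?_⟩
    have h4 : min 1 (Real.sqrt (L / (2 * (C + 1)))) ≤ Real.sqrt (L / (2 * (C + 1))) :=
      min_le_right _ _
    have h5 := Real.sq_sqrt (le_of_lt (show (0:ℝ) < L / (2 * (C + 1)) by positivity))
    have h6 : (min 1 (Real.sqrt (L / (2 * (C + 1))))) ^ 2 ≤ L / (2 * (C + 1)) := by
      nlinarith [Real.sqrt_nonneg (L / (2 * (C + 1))),
        lt_min one_pos (Real.sqrt_pos.2 (show (0:ℝ) < L / (2 * (C + 1)) by positivity))]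
    have h7 : L / (2 * (C + 1)) * (C + 1) = L / 2 := by field_simp
    calc (min 1 (Real.sqrt (L / (2 * (C + 1))))) ^ 2 * (C + 1)
        ≤ L / (2 * (C + 1)) * (C + 1) := by nlinarith
      _ = L / 2 := h7
  have hHε : H ε ≤ ε ^ 4 * C := by
    rw [hH, hCdef, ← integral_const_mul _ _]
    apply integral_mono (integrable_Fmu hμ0 hμ1 (hcont.const_smul ε)
      (expIntegrable_smul he hε0.ne'))
      (((he (4 * π) (by positivity)).div_const (8 * π)).const_mul (ε ^ 4))
    intro x
    exact Fmu_smul_le_small hμ0 hμ1 hε0.le hε1 (φ x)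
  have hgε : (ε ^ 2)⁻¹ * H ε < L / 2 := by
    have h1 : (ε ^ 2)⁻¹ * H ε ≤ (ε ^ 2)⁻¹ * (ε ^ 4 * C) :=
      mul_le_mul_of_nonneg_left hHε (by positivity)
    have h2 : (ε ^ 2)⁻¹ * (ε ^ 4 * C) = ε ^ 2 * C := by
      have : ε ≠ 0 := hε0.ne'
      field_simp
    have h3 : ε ^ 2 * C < ε ^ 2 * (C + 1) := by nlinarith
    linarith
  -- large parameter
  obtain ⟨M, hM1, hM2⟩ : ∃ M : ℝ, 1 ≤ M ∧ 2 * L < M ^ 2 * D := by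
    refine ⟨max 1 (Real.sqrt (2 * L / D)) + 1, by
      have := le_max_left 1 (Real.sqrt (2 * L / D)); linarith, ?_⟩
    have h1 : Real.sqrt (2 * L / D) < max 1 (Real.sqrt (2 * L / D)) + 1 := by
      have := le_max_right 1 (Real.sqrt (2 * L / D)); linarith
    have h5 := Real.sq_sqrt (le_of_lt (show (0:ℝ) < 2 * L / D by positivity))
    have h2 : 2 * L / D < (max 1 (Real.sqrt (2 * L / D)) + 1) ^ 2 := by
      nlinarith [Real.sqrt_nonneg (2 * L / D)]
    rw [div_lt_iff₀ hD] at h2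
    linarith
  have hM0 : 0 < M := lt_of_lt_of_le one_pos hM1
  have hHM : M ^ 4 * D ≤ H M := by
    rw [hH, hDdef, ← integral_const_mul _ _]
    apply integral_mono
      ((integrable_Fmu hμ0 hμ1 hcont he).const_mul (M ^ 4))
      (integrable_Fmu hμ0 hμ1 (hcont.const_smul M) (expIntegrable_smul he hM0.ne'))
    intro x
    exact Fmu_smul_ge_big hμ1 hM1 (φ x)
  have hgM : L / 2 < (M ^ 2)⁻¹ * H M := by
    have h4 : M ^ 2 * D ≤ (M ^ 2)⁻¹ * H M := by
      have h5 : (M ^ 2)⁻¹ * (M ^ 4 * D) = M ^ 2 * D := by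
        have : M ≠ 0 := hM0.ne'
        field_simp
      rw [← h5]
      exact mul_le_mul_of_nonneg_left hHM (by positivity)
    linarith
  -- IVT
  have hεM : ε ≤ M := le_trans hε1 hM1
  have hcH : ContinuousOn H (Icc 0 M) := by
    rw [hH]; exact contH hμ0 hμ1 hcont he hM0
  have hcg : ContinuousOn (fun c : ℝ => (c ^ 2)⁻¹ * H c) (Icc ε M) := by
    apply ContinuousOn.mul
    · apply ContinuousOn.inv₀ ((continuous_pow 2).continuousOn)
      intro c hc
      exact pow_ne_zero 2 (ne_of_gt (lt_of_lt_of_le hε0 hc.1))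
    · exact hcH.mono (fun c hc => ⟨le_trans hε0.le hc.1, hc.2⟩)
  have hmem2 : L / 2 ∈ Icc ((fun c : ℝ => (c ^ 2)⁻¹ * H c) ε) ((fun c : ℝ => (c ^ 2)⁻¹ * H c) M) :=
    ⟨le_of_lt hgε, le_of_lt hgM⟩
  obtain ⟨lam, hlammem, hglam⟩ := intermediate_value_Icc hεM hcg hmem2
  refine ⟨lam, lt_of_lt_of_le hε0 hlammem.1, ?_⟩
  have h6 : (lam ^ 2)⁻¹ * H lam = L / 2 := hglam
  rw [hH] at h6
  rw [← hLdef]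
  exact h6.symm

/-- The key pointwise inequality, integrand form. -/
lemma key_pointwise (z : ℂ) {lam : ℝ} (hlam : 0 < lam) :
    (lam ^ 2 - 1) / 2 * (nlDensity μ z - 2 * Fmu μ z) + Fmu μ z
      - (lam ^ 2)⁻¹ * Fmu μ (lam • z) ≤ 0 := by
  have hx : (0:ℝ) ≤ 4 * π * ‖z‖ ^ 2 := by positivity
  have hK := K_nonneg μ hx (t := lam ^ 2) (by positivity)
  have hπ : (π : ℝ) ≠ 0 := ne_of_gt pi_pos
  have hlam' : lam ≠ 0 := hlam.ne'
  have heq : (lam ^ 2 - 1) / 2 * (nlDensity μ z - 2 * Fmu μ z) + Fmu μ z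
        - (lam ^ 2)⁻¹ * Fmu μ (lam • z)
      = ((lam ^ 2 - 1) * ((4 * π * ‖z‖ ^ 2 - 1) * exp (4 * π * ‖z‖ ^ 2) + 1
            - μ * (4 * π * ‖z‖ ^ 2) ^ 2 / 2)
          + (exp (4 * π * ‖z‖ ^ 2) - 1 - 4 * π * ‖z‖ ^ 2 - μ * (4 * π * ‖z‖ ^ 2) ^ 2 / 2)
          - (exp (lam ^ 2 * (4 * π * ‖z‖ ^ 2)) - 1 - lam ^ 2 * (4 * π * ‖z‖ ^ 2)
            - μ * (lam ^ 2 * (4 * π * ‖z‖ ^ 2)) ^ 2 / 2) / lam ^ 2) / (8 * π) := by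
    rw [Fmu_smul_eq, Fmu_eq]
    unfold nlDensity
    field_simp
    ring
  rw [heq]
  apply div_nonpos_of_nonpos_of_nonneg _ (by positivity : (0:ℝ) ≤ 8 * π)
  linarith [hK]

end AuxIVT
/-- the variational characterization
`S_μ(Q_μ) = inf { S_μ(φ) : φ ∈ H¹∖{0}, I_μ(φ) = 0 }` (the infimum being attained at `Q_μ`). -/
theorem action_inf_over_I_zero (μ : ℝ) (hμ : μ = 0 ∨ μ = 1)
    (Q : E2 → ℂ) (hQ : IsGroundState μ Q)
    (hSQ : Smu μ Q = gradSq Q / 2) (hPQ : Pmu μ Q = 0) (hIQ : Imu μ Q = 0)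
    (hPchar : IsLeast {s : ℝ | ∃ φ : E2 → ℂ, MemH1 φ ∧ ExpIntegrable φ ∧
        ¬ φ =ᵐ[volume] (0 : E2 → ℂ) ∧ Pmu μ φ = 0 ∧ s = Smu μ φ} (Smu μ Q)) :
    IsLeast {s : ℝ | ∃ φ : E2 → ℂ, MemH1 φ ∧ ExpIntegrable φ ∧
        ¬ φ =ᵐ[volume] (0 : E2 → ℂ) ∧ Imu μ φ = 0 ∧ s = Smu μ φ} (Smu μ Q) := by
  have hμ0 : 0 ≤ μ := by rcases hμ with rfl | rfl <;> norm_num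
  have hμ1 : μ ≤ 1 := by rcases hμ with rfl | rfl <;> norm_num
  constructor
  · exact ⟨Q, hQ.mem, hQ.expint, hQ.nonzero, hIQ, rfl⟩
  · rintro s ⟨φ, hmem, hexp, hnz, hI, rfl⟩
    have hcont : Continuous φ := hmem.2.1.continuous
    obtain ⟨lam, hlam, hbal⟩ := exists_lam hμ0 hμ1 hmem hexp hnz
    -- the rescaled test function has `P = 0`
    have hPu : Pmu μ (fun y : E2 => lam • φ (lam • y)) = 0 := by
      show l2Sq (fun y : E2 => lam • φ (lam • y)) / 2
        - (∫ x : E2, Fmu μ (lam • φ (lam • x))) = 0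
      rw [l2Sq_scale hlam, intF_scale hlam, ← hbal]
      ring
    have h1 : Smu μ Q ≤ Smu μ (fun y : E2 => lam • φ (lam • y)) :=
      hPchar.2 ⟨_, memH1_scale hmem hlam, expIntegrable_scale hexp hlam,
        nonzero_scale hmem.1 hnz hlam, hPu, rfl⟩
    refine le_trans h1 ?_
    -- integrability bookkeeping
    have hintF : Integrable (fun x : E2 => Fmu μ (φ x)) := integrable_Fmu hμ0 hμ1 hcont hexp
    have hintFlam : Integrable (fun x : E2 => Fmu μ (lam • φ x)) :=
      integrable_Fmu hμ0 hμ1 (hcont.const_smul lam) (expIntegrable_smul hexp hlam.ne')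
    have hintNl : Integrable (fun x : E2 => nlDensity μ (φ x)) :=
      integrable_nl hμ0 hμ1 hcont hexp
    have hintA : Integrable (fun x : E2 => nlDensity μ (φ x) - 2 * Fmu μ (φ x)) :=
      hintNl.sub (hintF.const_mul 2)
    have hsplit : ∫ x : E2, (nlDensity μ (φ x) - 2 * Fmu μ (φ x))
        = (∫ x : E2, nlDensity μ (φ x)) - 2 * ∫ x : E2, Fmu μ (φ x) := by
      rw [integral_sub hintNl (hintF.const_mul 2), integral_const_mul _ _]
    have hgd : gradSq φ = (∫ x : E2, nlDensity μ (φ x)) - 2 * ∫ x : E2, Fmu μ (φ x) := by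
      have h := hI
      unfold Imu at h
      rw [hsplit] at h
      linarith
    -- the integral inequality coming from the pointwise one
    have hintB : Integrable (fun x : E2 =>
        (lam ^ 2 - 1) / 2 * (nlDensity μ (φ x) - 2 * Fmu μ (φ x)) + Fmu μ (φ x)) :=
      (hintA.const_mul _).add hintF
    have hΔ : ∫ x : E2, ((lam ^ 2 - 1) / 2 * (nlDensity μ (φ x) - 2 * Fmu μ (φ x))
        + Fmu μ (φ x) - (lam ^ 2)⁻¹ * Fmu μ (lam • φ x)) ≤ 0 :=
      integral_nonpos (fun x => key_pointwise (φ x) hlam)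
    have hΔeq : ∫ x : E2, ((lam ^ 2 - 1) / 2 * (nlDensity μ (φ x) - 2 * Fmu μ (φ x))
          + Fmu μ (φ x) - (lam ^ 2)⁻¹ * Fmu μ (lam • φ x))
        = (lam ^ 2 - 1) / 2 * ((∫ x : E2, nlDensity μ (φ x)) - 2 * ∫ x : E2, Fmu μ (φ x))
          + (∫ x : E2, Fmu μ (φ x)) - (lam ^ 2)⁻¹ * ∫ x : E2, Fmu μ (lam • φ x) := by
      rw [integral_sub hintB (hintFlam.const_mul _),
        integral_add (hintA.const_mul _) hintF, integral_const_mul _ _, integral_const_mul _ _,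
        hsplit]
    rw [hΔeq] at hΔ
    -- compute the two actions
    have hSu : Smu μ (fun y : E2 => lam • φ (lam • y))
        = lam ^ 2 * gradSq φ / 2 - (lam ^ 2)⁻¹ * (∫ x : E2, Fmu μ (lam • φ x))
          + l2Sq φ / 2 := by
      show gradSq (fun y : E2 => lam • φ (lam • y)) / 2
          - (∫ x : E2, Fmu μ (lam • φ (lam • x)))
          + l2Sq (fun y : E2 => lam • φ (lam • y)) / 2 = _
      rw [gradSq_scale hmem.2.1 hlam, l2Sq_scale hlam, intF_scale hlam]
    have hSφ : Smu μ φ = gradSq φ / 2 - (∫ x : E2, Fmu μ (φ x)) + l2Sq φ / 2 := rfl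
    rw [hSu, hSφ, hgd]
    linarith [hΔ]
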